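/- arXiv:2605.23379 — 2 statements merged into one kernel-verified Lean document; each statement's English description precedes it below -/
import Mathlib

section
/- Let T be a finite tree with at least two edges. Then the largest eigenvalue of its Ricci matrix satisfies λ_max(R_T) ≥ −1. -/
open SimpleGraph Matrix Finset

/-- The largest eigenvalue of a real matrix, defined as the supremum of its set of
real eigenvalues. -/
noncomputable def lambdaMax {n : Type*} [Fintype n] (M : Matrix n n ℝ) : ℝ :=
  sSup {μ : ℝ | ∃ x : n → ℝ, x ≠ 0 ∧ M.mulVec x = μ • x}

/-- The Ricci matrix of a graph: `(R)_{e,e} = -(1/d_x + 1/d_y)` for `e = {x,y}`,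
`(R)_{e,e'} = 1/d_z` for distinct edges sharing the endpoint `z`, and `0` for
disjoint edges. -/
noncomputable def ricciMatrix {V : Type*} [Fintype V] [DecidableEq V]
    (G : SimpleGraph V) [DecidableRel G.Adj] :
    Matrix G.edgeSet G.edgeSet ℝ := fun e e' =>
  (if e = e' then (-1 : ℝ) else 1) *
    ∑ z : V, (if z ∈ (e : Sym2 V) ∧ z ∈ (e' : Sym2 V) then ((G.degree z : ℝ))⁻¹ else 0)

-- quadratic form bounded by max eigenvalue
lemma quad_le_max {n : Type*} [Fintype n] [DecidableEq n]
    {A : Matrix n n ℝ} (hA : A.IsHermitian) {μ : ℝ}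
    (hμ : ∀ i, hA.eigenvalues i ≤ μ) (x : n → ℝ) :
    x ⬝ᵥ A *ᵥ x ≤ μ * (x ⬝ᵥ x) := by
  set U : Matrix n n ℝ := (hA.eigenvectorUnitary : Matrix n n ℝ) with hU
  have hstar : (star U : Matrix n n ℝ) = Uᵀ := by
    ext i j; simp [Matrix.star_apply]
  set y : n → ℝ := Uᵀ *ᵥ x with hy
  have htransfer : ∀ w : n → ℝ, x ⬝ᵥ (U *ᵥ w) = y ⬝ᵥ w := by
    intro w
    rw [Matrix.dotProduct_mulVec, hy, Matrix.mulVec_transpose]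
  have h2 : x ⬝ᵥ x = y ⬝ᵥ y := by
    have h1 : (U * star U) = 1 := Matrix.mem_unitaryGroup_iff.mp hA.eigenvectorUnitary.2
    calc x ⬝ᵥ x = x ⬝ᵥ ((U * star U) *ᵥ x) := by rw [h1, Matrix.one_mulVec]
    _ = x ⬝ᵥ (U *ᵥ (star U *ᵥ x)) := by rw [← Matrix.mulVec_mulVec]
    _ = y ⬝ᵥ y := by rw [htransfer, hstar]
  have h3 : x ⬝ᵥ A *ᵥ x = ∑ i, hA.eigenvalues i * (y i * y i) := by
    conv_lhs => rw [hA.spectral_theorem, Unitary.conjStarAlgAut_apply]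
    rw [Matrix.mul_assoc, ← Matrix.mulVec_mulVec, htransfer, ← Matrix.mulVec_mulVec, hstar, ← hy]
    simp [dotProduct, Matrix.mulVec_diagonal]
    ring_nf
    apply Finset.sum_congr rfl
    intro i _
    ring
  rw [h3, h2]
  have : y ⬝ᵥ y = ∑ i, y i * y i := rfl
  rw [this, Finset.mul_sum]
  apply Finset.sum_le_sum
  intro i _
  have hsq : 0 ≤ y i * y i := mul_self_nonneg _
  exact mul_le_mul_of_nonneg_right (hμ i) hsq

lemma sum_mem_pair {V : Type*} [Fintype V] [DecidableEq V] (a b : V) (hab : a ≠ b) (f : V → ℝ) :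
    (∑ v : V, if v = a ∨ v = b then f v else 0) = f a + f b := by
  have : ∀ v : V, (if v = a ∨ v = b then f v else 0)
      = (if v ∈ ({a, b} : Finset V) then f v else 0) := by
    intro v; simp [Finset.mem_insert]
  rw [Finset.sum_congr rfl fun v _ => this v, Finset.sum_ite_mem, Finset.univ_inter,
    Finset.sum_pair hab]

/-- For a finite tree with at least two edges, `λ_max(R_T) ≥ -1`. -/
theorem lambdaMax_ricci_ge_neg_one {V : Type*} [Fintype V] [DecidableEq V]
    (G : SimpleGraph V) [DecidableRel G.Adj]
    (hT : G.IsTree) (h2 : 2 ≤ G.edgeFinset.card) :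
    -1 ≤ lambdaMax (ricciMatrix G) := by
  classical
  have hcard : G.edgeFinset.card + 1 = Fintype.card V := hT.card_edgeFinset
  have hdeg : ∃ z : V, 2 ≤ G.degree z := by
    by_contra h
    push_neg at h
    have hsum : ∑ v : V, G.degree v = 2 * G.edgeFinset.card :=
      G.sum_degrees_eq_twice_card_edges
    have hle : ∑ v : V, G.degree v ≤ Fintype.card V * 1 := by
      rw [← Finset.card_univ, ← smul_eq_mul]
      exact Finset.sum_le_card_nsmul _ _ 1 fun v _ => by have := h v; omega
    omega
  obtain ⟨z, hz⟩ := hdeg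
  have hnb : 1 < (G.neighborFinset z).card := by
    rwa [G.card_neighborFinset_eq_degree]
  obtain ⟨u, w, hu, hw, huw⟩ := Finset.one_lt_card_iff.mp hnb
  rw [SimpleGraph.mem_neighborFinset] at hu hw
  have hzu : z ≠ u := G.ne_of_adj hu
  have hzw : z ≠ w := G.ne_of_adj hw
  have he1 : s(z,u) ∈ G.edgeSet := hu
  have he2 : s(z,w) ∈ G.edgeSet := hw
  set e1 : G.edgeSet := ⟨s(z,u), he1⟩ with he1d
  set e2 : G.edgeSet := ⟨s(z,w), he2⟩ with he2d
  have hne : e1 ≠ e2 := by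
    intro h
    exact huw (Sym2.congr_right.mp (Subtype.ext_iff.mp h))
  haveI : Nonempty G.edgeSet := ⟨e1⟩
  set A := ricciMatrix G with hAd
  have hA : A.IsHermitian := by
    ext i j
    simp only [hAd, ricciMatrix, Matrix.conjTranspose_apply, star_trivial]
    exact congrArg₂ (· * ·) (if_congr eq_comm rfl rfl)
      (Finset.sum_congr rfl fun v _ => if_congr and_comm rfl rfl)
  obtain ⟨i0, -, hi0⟩ := Finset.exists_max_image Finset.univ hA.eigenvalues
    ⟨Classical.arbitrary _, Finset.mem_univ _⟩
  set μ := hA.eigenvalues i0 with hμd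
  have hμall : ∀ i, hA.eigenvalues i ≤ μ := fun i => hi0 i (Finset.mem_univ i)
  have hmem : μ ∈ {ν : ℝ | ∃ x : G.edgeSet → ℝ, x ≠ 0 ∧ A.mulVec x = ν • x} := by
    refine ⟨⇑(hA.eigenvectorBasis i0), ?_, hA.mulVec_eigenvectorBasis i0⟩
    have hnz := hA.eigenvectorBasis.orthonormal.ne_zero i0
    intro h
    apply hnz
    ext j
    exact congrFun h j
  have hbdd : BddAbove {ν : ℝ | ∃ x : G.edgeSet → ℝ, x ≠ 0 ∧ A.mulVec x = ν • x} := by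
    refine ⟨μ, ?_⟩
    rintro ν ⟨x, hx, hxe⟩
    have hpos : 0 < x ⬝ᵥ x := by
      rcases lt_or_eq_of_le (Finset.sum_nonneg fun i _ => mul_self_nonneg (x i)) with h | h
      · exact h
      · exact absurd (dotProduct_self_eq_zero.mp h.symm) hx
    have hq : x ⬝ᵥ A *ᵥ x = ν * (x ⬝ᵥ x) := by
      rw [hxe, dotProduct_smul, smul_eq_mul]
    have := quad_le_max hA hμall x
    rw [hq] at this
    exact le_of_mul_le_mul_right (by linarith) hpos
  -- test vector
  set xt : G.edgeSet → ℝ := Pi.single e1 1 + Pi.single e2 1 with hxt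
  have hu1 : (1:ℝ) ≤ G.degree u := by
    have : 0 < G.degree u := by
      rw [← G.card_neighborFinset_eq_degree, Finset.card_pos]
      exact ⟨z, (G.mem_neighborFinset u z).mpr hu.symm⟩
    exact_mod_cast this
  have hw1 : (1:ℝ) ≤ G.degree w := by
    have : 0 < G.degree w := by
      rw [← G.card_neighborFinset_eq_degree, Finset.card_pos]
      exact ⟨z, (G.mem_neighborFinset w z).mpr hw.symm⟩
    exact_mod_cast this
  have hA11 : A e1 e1 = -((G.degree z:ℝ)⁻¹ + (G.degree u:ℝ)⁻¹) := by
    simp only [hAd, ricciMatrix, he1d]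
    rw [if_pos trivial, neg_one_mul]
    congr 1
    have : ∀ v : V, (v ∈ (s(z,u):Sym2 V) ∧ v ∈ (s(z,u):Sym2 V)) ↔ (v = z ∨ v = u) := by
      intro v; simp [Sym2.mem_iff]
    rw [Finset.sum_congr rfl fun v _ => by rw [if_congr (this v) rfl rfl]]
    exact sum_mem_pair z u hzu _
  have hA22 : A e2 e2 = -((G.degree z:ℝ)⁻¹ + (G.degree w:ℝ)⁻¹) := by
    simp only [hAd, ricciMatrix, he2d]
    rw [if_pos trivial, neg_one_mul]
    congr 1
    have : ∀ v : V, (v ∈ (s(z,w):Sym2 V) ∧ v ∈ (s(z,w):Sym2 V)) ↔ (v = z ∨ v = w) := by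
      intro v; simp [Sym2.mem_iff]
    rw [Finset.sum_congr rfl fun v _ => by rw [if_congr (this v) rfl rfl]]
    exact sum_mem_pair z w hzw _
  have hoffsum : (∑ v : V, if v ∈ (s(z,u):Sym2 V) ∧ v ∈ (s(z,w):Sym2 V)
      then ((G.degree v : ℝ))⁻¹ else 0) = (G.degree z:ℝ)⁻¹ := by
    have : ∀ v : V, (v ∈ (s(z,u):Sym2 V) ∧ v ∈ (s(z,w):Sym2 V)) ↔ v = z := by
      intro v
      simp only [Sym2.mem_iff]
      constructor
      · rintro ⟨h1 | h1, h2 | h2⟩ <;>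
          first
          | exact h1
          | exact h2
          | exact absurd (h1.symm.trans h2) huw
      · rintro rfl; exact ⟨Or.inl rfl, Or.inl rfl⟩
    rw [Finset.sum_congr rfl fun v _ => by rw [if_congr (this v) rfl rfl],
      Finset.sum_ite_eq' Finset.univ z]
    simp
  have hA12 : A e1 e2 = (G.degree z:ℝ)⁻¹ := by
    simp only [hAd, ricciMatrix, if_neg hne, one_mul, he1d, he2d]
    rw [if_neg (show (⟨s(z,u), he1⟩ : G.edgeSet) ≠ ⟨s(z,w), he2⟩ from hne), one_mul]
    exact hoffsum
  have hA21 : A e2 e1 = (G.degree z:ℝ)⁻¹ := by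
    have h := congrFun (congrFun hA e1) e2
    rw [Matrix.conjTranspose_apply, star_trivial] at h
    rw [h]
    exact hA12
  have hquad : xt ⬝ᵥ A *ᵥ xt = A e1 e1 + A e1 e2 + (A e2 e1 + A e2 e2) := by
    rw [hxt, Matrix.mulVec_add, Matrix.mulVec_single, Matrix.mulVec_single,
      dotProduct_add, add_dotProduct, add_dotProduct]
    simp [single_dotProduct]
    ring
  have hxx : xt ⬝ᵥ xt = 2 := by
    rw [hxt, dotProduct_add, add_dotProduct, add_dotProduct]
    simp [single_dotProduct, Pi.single_apply, if_neg hne, if_neg (Ne.symm hne)]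
    norm_num
  have hqval : xt ⬝ᵥ A *ᵥ xt = -((G.degree u:ℝ)⁻¹ + (G.degree w:ℝ)⁻¹) := by
    rw [hquad, hA11, hA22, hA12, hA21]
    ring
  have hdu : (G.degree u:ℝ)⁻¹ ≤ 1 := by
    rw [inv_le_one_iff₀]; right; exact hu1
  have hdw : (G.degree w:ℝ)⁻¹ ≤ 1 := by
    rw [inv_le_one_iff₀]; right; exact hw1
  have hlow : (-2:ℝ) ≤ xt ⬝ᵥ A *ᵥ xt := by rw [hqval]; linarith
  have hup := quad_le_max hA hμall xt
  rw [hxx] at hup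
  have hμge : -1 ≤ μ := by linarith
  exact le_trans hμge (le_csSup hbdd hmem)
end

section
/- Let T be a finite tree with at least one edge, v a vertex of T with degree d = d_T(v), and T' the tree obtained from T by attaching one new pendant edge at v. Then for every f : E(T) → ℝ and every y ∈ ℝ, the extension f_y of f to E(T') satisfies ⟨f_y, R_{T'} f_y⟩ − ⟨f, R_T f⟩ = −(S² − 2A)/(d(d+1)) + 2Sy/(d+1) − ((d+2)/(d+1)) y², where S = Σ_{e ∋ v} f_e and A = Σ_{e ∋ v} f_e² (sums over edges of T incident to v). -/
open SimpleGraph Matrix Finset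

/-- Adjacency for the tree obtained by attaching `k` new pendant vertices at `v`. -/
def addLeavesAdj {V : Type*} (G : SimpleGraph V) (v : V) (k : ℕ) :
    V ⊕ Fin k → V ⊕ Fin k → Prop
  | Sum.inl x, Sum.inl y => G.Adj x y
  | Sum.inl x, Sum.inr _ => x = v
  | Sum.inr _, Sum.inl y => y = v
  | Sum.inr _, Sum.inr _ => False

/-- The tree obtained from `G` by attaching `k` new pendant edges at `v`:
`k` new vertices `Sum.inr i`, each joined to `v` by a new edge. -/
def addLeaves {V : Type*} (G : SimpleGraph V) (v : V) (k : ℕ) :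
    SimpleGraph (V ⊕ Fin k) where
  Adj := addLeavesAdj G v k
  symm := by
    constructor
    intro a b h
    cases a <;> cases b <;> simp_all [addLeavesAdj] <;> exact h.symm
  loopless := by
    constructor
    intro a
    cases a <;> simp [addLeavesAdj]

instance {V : Type*} [DecidableEq V] (G : SimpleGraph V) [DecidableRel G.Adj]
    (v : V) (k : ℕ) : DecidableRel (addLeaves G v k).Adj := fun a b =>
  match a, b with
  | Sum.inl x, Sum.inl y => inferInstanceAs (Decidable (G.Adj x y))
  | Sum.inl x, Sum.inr _ => inferInstanceAs (Decidable (x = v))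
  | Sum.inr _, Sum.inl y => inferInstanceAs (Decidable (y = v))
  | Sum.inr _, Sum.inr _ => inferInstanceAs (Decidable False)

/-- The extension `f_y` of an edge function `f` on `G` to `addLeaves G v 1`:
it agrees with `f` on (the images of) old edges and takes the value `y` on the new
pendant edge. -/
noncomputable def extendLeaf {V : Type*} [Fintype V] [DecidableEq V]
    (G : SimpleGraph V) [DecidableRel G.Adj] (v : V) (f : G.edgeSet → ℝ) (y : ℝ) :
    (addLeaves G v 1).edgeSet → ℝ := fun e =>
  if h : ∃ e₀ : G.edgeSet, Sym2.map Sum.inl (e₀ : Sym2 V) = (e : Sym2 (V ⊕ Fin 1))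
  then f h.choose else y


section Aux

variable {V : Type*} [Fintype V] [DecidableEq V] (G : SimpleGraph V) [DecidableRel G.Adj] (v : V)

lemma sum_eps {ι : Type*} [Fintype ι] [DecidableEq ι] (g : ι → ℝ) :
    ∑ e : ι, ∑ e' : ι, (if e = e' then (-1:ℝ) else 1) * (g e * g e')
      = (∑ e : ι, g e)^2 - 2 * ∑ e : ι, (g e)^2 := by
  have key : ∀ e e' : ι, (if e = e' then (-1:ℝ) else 1) * (g e * g e')
      = g e * g e' - 2 * (if e = e' then g e * g e' else 0) := by
    intro e e'; split_ifs <;> ring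
  simp only [key, Finset.sum_sub_distrib, ← Finset.mul_sum, Finset.sum_ite_eq,
    Finset.mem_univ, if_true]
  rw [sq, Finset.sum_mul_sum]
  simp [Finset.mul_sum, pow_two]

lemma quadForm (f : G.edgeSet → ℝ) :
    f ⬝ᵥ (ricciMatrix G).mulVec f =
      ∑ z : V, ((G.degree z : ℝ))⁻¹ *
        ((∑ e : G.edgeSet, if z ∈ (e : Sym2 V) then f e else 0)^2 -
          2 * ∑ e : G.edgeSet, if z ∈ (e : Sym2 V) then (f e)^2 else 0) := by
  classical
  simp only [dotProduct, Matrix.mulVec, ricciMatrix, Finset.mul_sum, Finset.sum_mul]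
  rw [Finset.sum_comm]
  conv_lhs => enter [2, y]; rw [Finset.sum_comm]
  rw [Finset.sum_comm]
  refine Finset.sum_congr rfl fun z _ => ?_
  have pt : ∀ x y' : G.edgeSet,
      f x * (((if x = y' then (-1:ℝ) else 1) *
          if z ∈ (x : Sym2 V) ∧ z ∈ (y' : Sym2 V) then ((G.degree z : ℝ))⁻¹ else 0) * f y')
        = ((G.degree z : ℝ))⁻¹ * ((if x = y' then (-1:ℝ) else 1) *
            ((if z ∈ (x : Sym2 V) then f x else 0) * (if z ∈ (y' : Sym2 V) then f y' else 0))) := by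
    intro x y'
    rcases eq_or_ne x y' with rfl | hxy
    · by_cases hx : z ∈ (x : Sym2 V) <;> simp [hx] <;> ring
    · by_cases hx : z ∈ (x : Sym2 V) <;> by_cases hy : z ∈ (y' : Sym2 V) <;>
        simp [hx, hy, hxy] <;> ring
  simp only [pt, ← Finset.mul_sum]
  congr 1
  rw [← Finset.sum_comm (f := fun a b : G.edgeSet => (if a = b then (-1:ℝ) else 1) *
      ((if z ∈ (a : Sym2 V) then f a else 0) * (if z ∈ (b : Sym2 V) then f b else 0))), sum_eps]
  congr 2
  refine Finset.sum_congr rfl fun e _ => ?_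
  by_cases he : z ∈ (e : Sym2 V) <;> simp [he]

lemma addLeaves_adj_inl_inl (x w : V) :
    (addLeaves G v 1).Adj (Sum.inl x) (Sum.inl w) ↔ G.Adj x w := Iff.rfl

lemma addLeaves_adj_inl_inr (x : V) (i : Fin 1) :
    (addLeaves G v 1).Adj (Sum.inl x) (Sum.inr i) ↔ x = v := Iff.rfl

lemma addLeaves_adj_inr_inl (i : Fin 1) (w : V) :
    (addLeaves G v 1).Adj (Sum.inr i) (Sum.inl w) ↔ w = v := Iff.rfl

lemma addLeaves_adj_inr_inr (i j : Fin 1) :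
    ¬ (addLeaves G v 1).Adj (Sum.inr i) (Sum.inr j) := fun h => h

/-- Image of an old edge in the extended graph. -/
def embEdge (e : G.edgeSet) : (addLeaves G v 1).edgeSet :=
  ⟨Sym2.map Sum.inl (e : Sym2 V), by
    obtain ⟨s, hs⟩ := e
    induction s using Sym2.ind with
    | _ a b =>
      rw [SimpleGraph.mem_edgeSet] at hs
      simp only [Sym2.map_pair_eq, SimpleGraph.mem_edgeSet]; exact hs⟩

/-- The new pendant edge. -/
def newEdge : (addLeaves G v 1).edgeSet :=
  ⟨s(Sum.inl v, Sum.inr 0), by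
    rw [SimpleGraph.mem_edgeSet]; exact rfl⟩

lemma inl_mem_embEdge (w : V) (e : G.edgeSet) :
    Sum.inl w ∈ ((embEdge G v e : Sym2 (V ⊕ Fin 1))) ↔ w ∈ (e : Sym2 V) := by
  simp [embEdge, Sym2.mem_map]

lemma inr_not_mem_embEdge (i : Fin 1) (e : G.edgeSet) :
    Sum.inr i ∉ ((embEdge G v e : Sym2 (V ⊕ Fin 1))) := by
  simp [embEdge, Sym2.mem_map]

lemma inl_mem_newEdge (w : V) :
    Sum.inl w ∈ ((newEdge G v : Sym2 (V ⊕ Fin 1))) ↔ w = v := by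
  simp [newEdge]

lemma inr_mem_newEdge (i : Fin 1) :
    Sum.inr i ∈ ((newEdge G v : Sym2 (V ⊕ Fin 1))) := by
  have : i = 0 := Subsingleton.elim i 0
  subst this
  simp [newEdge]

lemma embEdge_ne_newEdge (e : G.edgeSet) : embEdge G v e ≠ newEdge G v := by
  intro h
  exact inr_not_mem_embEdge G v 0 e (h ▸ inr_mem_newEdge G v 0)

lemma sum_edgeSet_addLeaves (F : (addLeaves G v 1).edgeSet → ℝ) :
    ∑ e, F e = (∑ e : G.edgeSet, F (embEdge G v e)) + F (newEdge G v) := by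
  have hbij : Function.Bijective
      (fun o : Option G.edgeSet => Option.elim o (newEdge G v) (embEdge G v)) := by
    constructor
    · intro o₁ o₂ h
      match o₁, o₂ with
      | none, none => rfl
      | none, some e => exact absurd h.symm (embEdge_ne_newEdge G v e)
      | some e, none => exact absurd h (embEdge_ne_newEdge G v e)
      | some e₁, some e₂ =>
        have : (e₁ : Sym2 V) = (e₂ : Sym2 V) :=
          Sym2.map.injective Sum.inl_injective (Subtype.ext_iff.mp h)
        exact congrArg some (Subtype.ext this)
    · rintro ⟨s, hs⟩
      induction s using Sym2.ind with
      | _ a b =>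
        rw [SimpleGraph.mem_edgeSet] at hs
        match a, b with
        | Sum.inl x, Sum.inl w =>
          exact ⟨some ⟨s(x, w), hs⟩, Subtype.ext (by simp [embEdge])⟩
        | Sum.inl x, Sum.inr i =>
          have hx : x = v := hs
          subst hx
          have : i = 0 := Subsingleton.elim i 0
          subst this
          exact ⟨none, rfl⟩
        | Sum.inr i, Sum.inl w =>
          have hw : w = v := hs
          subst hw
          have : i = 0 := Subsingleton.elim i 0
          subst this
          exact ⟨none, Subtype.ext (Sym2.eq_swap)⟩
        | Sum.inr i, Sum.inr j => exact absurd hs (addLeaves_adj_inr_inr G v i j)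
  rw [← Fintype.sum_bijective _ hbij _ F (fun o => rfl), Fintype.sum_option]
  exact add_comm _ _

lemma extendLeaf_embEdge (f : G.edgeSet → ℝ) (y : ℝ) (e : G.edgeSet) :
    extendLeaf G v f y (embEdge G v e) = f e := by
  unfold extendLeaf
  have hex : ∃ e₀ : G.edgeSet, Sym2.map Sum.inl (e₀ : Sym2 V)
      = ((embEdge G v e : Sym2 (V ⊕ Fin 1))) := ⟨e, rfl⟩
  rw [dif_pos hex]
  congr 1
  exact Subtype.ext (Sym2.map.injective Sum.inl_injective hex.choose_spec)

lemma extendLeaf_newEdge (f : G.edgeSet → ℝ) (y : ℝ) :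
    extendLeaf G v f y (newEdge G v) = y := by
  unfold extendLeaf
  rw [dif_neg]
  rintro ⟨e₀, he₀⟩
  have h0 : Sum.inr (0 : Fin 1) ∈ Sym2.map Sum.inl (e₀ : Sym2 V) := by
    rw [he₀]; exact inr_mem_newEdge G v 0
  simp [Sym2.mem_map] at h0

lemma degree_addLeaves_inl (w : V) :
    (addLeaves G v 1).degree (Sum.inl w) = G.degree w + (if w = v then 1 else 0) := by
  rw [SimpleGraph.degree, SimpleGraph.neighborFinset_eq_filter, Finset.card_filter,
    SimpleGraph.degree, SimpleGraph.neighborFinset_eq_filter, Finset.card_filter,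
    Fintype.sum_sum_type]
  have hA : (∑ a₁ : V, if (addLeaves G v 1).Adj (Sum.inl w) (Sum.inl a₁) then 1 else 0)
      = ∑ i : V, if G.Adj w i then (1:ℕ) else 0 :=
    Finset.sum_congr rfl fun x _ => if_congr (addLeaves_adj_inl_inl G v w x) rfl rfl
  have hB : (∑ a₂ : Fin 1, if (addLeaves G v 1).Adj (Sum.inl w) (Sum.inr a₂) then 1 else 0)
      = if w = v then (1:ℕ) else 0 := by
    rw [Fin.sum_univ_one]
    exact if_congr (addLeaves_adj_inl_inr G v w 0) rfl rfl
  rw [hA, hB]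

lemma degree_addLeaves_inr (i : Fin 1) :
    (addLeaves G v 1).degree (Sum.inr i) = 1 := by
  rw [SimpleGraph.degree, SimpleGraph.neighborFinset_eq_filter, Finset.card_filter,
    Fintype.sum_sum_type]
  have h1 : ∑ x : V, (if (addLeaves G v 1).Adj (Sum.inr i) (Sum.inl x) then 1 else 0)
      = ∑ x : V, (if x = v then 1 else 0) :=
    Finset.sum_congr rfl fun x _ => if_congr (addLeaves_adj_inr_inl G v i x) rfl rfl
  have h2 : ∑ j : Fin 1, (if (addLeaves G v 1).Adj (Sum.inr i) (Sum.inr j) then 1 else 0) = 0 := by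
    rw [Fin.sum_univ_one, if_neg (addLeaves_adj_inr_inr G v i 0)]
  rw [h1, h2, Finset.sum_ite_eq' Finset.univ v (fun _ => 1), if_pos (Finset.mem_univ v)]

end Aux

/-- Rayleigh difference formula for one-step leaf addition:
`⟨f_y, R_{T'} f_y⟩ − ⟨f, R_T f⟩ = −(S² − 2A)/(d(d+1)) + 2Sy/(d+1) − ((d+2)/(d+1)) y²`,
where `T'` is obtained from `T` by attaching one pendant edge at `v`, `d = d_T(v)`,
`S = Σ_{e ∋ v} f_e` and `A = Σ_{e ∋ v} f_e²`. -/
theorem rayleigh_difference_one_step {V : Type*} [Fintype V] [DecidableEq V]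
    (G : SimpleGraph V) [DecidableRel G.Adj]
    (hT : G.IsTree) (h1 : 1 ≤ G.edgeFinset.card) (v : V) (f : G.edgeSet → ℝ) (y : ℝ) :
    (extendLeaf G v f y) ⬝ᵥ (ricciMatrix (addLeaves G v 1)).mulVec (extendLeaf G v f y) -
        f ⬝ᵥ (ricciMatrix G).mulVec f =
      -(((∑ e : G.edgeSet, if v ∈ (e : Sym2 V) then f e else 0) ^ 2 -
            2 * ∑ e : G.edgeSet, if v ∈ (e : Sym2 V) then (f e) ^ 2 else 0) /
          ((G.degree v : ℝ) * ((G.degree v : ℝ) + 1))) +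
        2 * (∑ e : G.edgeSet, if v ∈ (e : Sym2 V) then f e else 0) * y /
          ((G.degree v : ℝ) + 1) -
        (((G.degree v : ℝ) + 2) / ((G.degree v : ℝ) + 1)) * y ^ 2 := by
  classical
  have hdeg : 0 < G.degree v := by
    rw [SimpleGraph.degree_pos_iff_exists_adj]
    obtain ⟨e, he⟩ := Finset.card_pos.mp h1
    rw [SimpleGraph.mem_edgeFinset] at he
    induction e using Sym2.ind with
    | _ a b =>
      rw [SimpleGraph.mem_edgeSet] at he
      by_cases hav : a = v
      · exact ⟨b, hav ▸ he⟩
      · obtain ⟨p⟩ := hT.isConnected.preconnected v a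
        exact ⟨_, p.adj_snd (SimpleGraph.Walk.not_nil_of_ne fun h => hav h.symm)⟩
  have hd1 : (1:ℝ) ≤ (G.degree v : ℝ) := by exact_mod_cast hdeg
  have hd0 : (G.degree v : ℝ) ≠ 0 := by linarith
  have hd10 : (G.degree v : ℝ) + 1 ≠ 0 := by linarith
  have hS' : ∀ w : V,
      (∑ e' : (addLeaves G v 1).edgeSet,
          if Sum.inl w ∈ (e' : Sym2 (V ⊕ Fin 1)) then extendLeaf G v f y e' else 0)
        = (∑ e : G.edgeSet, if w ∈ (e : Sym2 V) then f e else 0) + (if w = v then y else 0) := by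
    intro w
    rw [sum_edgeSet_addLeaves]
    congr 1
    · refine Finset.sum_congr rfl fun e _ => ?_
      rw [extendLeaf_embEdge]
      exact if_congr (inl_mem_embEdge G v w e) rfl rfl
    · rw [extendLeaf_newEdge]
      exact if_congr (inl_mem_newEdge G v w) rfl rfl
  have hA' : ∀ w : V,
      (∑ e' : (addLeaves G v 1).edgeSet,
          if Sum.inl w ∈ (e' : Sym2 (V ⊕ Fin 1)) then (extendLeaf G v f y e')^2 else 0)
        = (∑ e : G.edgeSet, if w ∈ (e : Sym2 V) then (f e)^2 else 0)
            + (if w = v then y^2 else 0) := by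
    intro w
    rw [sum_edgeSet_addLeaves]
    congr 1
    · refine Finset.sum_congr rfl fun e _ => ?_
      rw [extendLeaf_embEdge]
      exact if_congr (inl_mem_embEdge G v w e) rfl rfl
    · rw [extendLeaf_newEdge]
      exact if_congr (inl_mem_newEdge G v w) rfl rfl
  have hSr : (∑ e' : (addLeaves G v 1).edgeSet,
      if Sum.inr (0 : Fin 1) ∈ (e' : Sym2 (V ⊕ Fin 1)) then extendLeaf G v f y e' else 0) = y := by
    rw [sum_edgeSet_addLeaves]
    rw [Finset.sum_eq_zero fun e _ => if_neg (inr_not_mem_embEdge G v 0 e)]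
    rw [if_pos (inr_mem_newEdge G v 0), extendLeaf_newEdge, zero_add]
  have hAr : (∑ e' : (addLeaves G v 1).edgeSet,
      if Sum.inr (0 : Fin 1) ∈ (e' : Sym2 (V ⊕ Fin 1)) then (extendLeaf G v f y e')^2 else 0)
        = y^2 := by
    rw [sum_edgeSet_addLeaves]
    rw [Finset.sum_eq_zero fun e _ => if_neg (inr_not_mem_embEdge G v 0 e)]
    rw [if_pos (inr_mem_newEdge G v 0), extendLeaf_newEdge, zero_add]
  have hcast : ∀ w : V, (((addLeaves G v 1).degree (Sum.inl w) : ℝ))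
      = (G.degree w : ℝ) + (if w = v then 1 else 0) := by
    intro w
    by_cases hw : w = v <;> simp [degree_addLeaves_inl, hw]
  have hcast2 : (((addLeaves G v 1).degree (Sum.inr (0 : Fin 1)) : ℝ)) = 1 := by
    rw [degree_addLeaves_inr]; norm_num
  rw [quadForm, quadForm, Fintype.sum_sum_type, Fin.sum_univ_one]
  simp only [hS', hA', hSr, hAr, hcast, hcast2]
  rw [add_sub_right_comm, ← Finset.sum_sub_distrib]
  rw [Finset.sum_eq_single v
    (fun w _ hw => by simp only [if_neg hw]; ring)
    (fun h => absurd (Finset.mem_univ v) h)]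
  simp only [if_pos rfl, if_pos trivial]
  field_simp
  ring
end
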